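/- Let r : [0,1] → ℝ be a nonnegative differentiable function satisfying r(z)·r′(1−z) = z − 1 for every z ∈ [0,1]. Then there exists k ≥ 1 such that for every z ∈ [0,1], r(z) = ((1+k)/2 − z)^((1+k)/(2k)) · (z + (k−1)/2)^((k−1)/(2k)). -/

import Mathlib

open Set Filter

/-- Characterization of nonnegative differentiable solutions of
`r z · r' (1-z) = z - 1` on `[0,1]`: they are exactly the family
`r z = ((1+k)/2 - z)^((1+k)/(2k)) · (z + (k-1)/2)^((k-1)/(2k))` with `k ≥ 1`
(real powers). -/
theorem solution_family (r r' : ℝ → ℝ)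
    (hderiv : ∀ z ∈ Set.Icc (0:ℝ) 1, HasDerivWithinAt r (r' z) (Set.Icc 0 1) z)
    (hnonneg : ∀ z ∈ Set.Icc (0:ℝ) 1, 0 ≤ r z)
    (heq : ∀ z ∈ Set.Icc (0:ℝ) 1, r z * r' (1 - z) = z - 1) :
    ∃ k : ℝ, 1 ≤ k ∧ ∀ z ∈ Set.Icc (0:ℝ) 1,
      r z = ((1 + k) / 2 - z) ^ ((1 + k) / (2 * k)) *
            (z + (k - 1) / 2) ^ ((k - 1) / (2 * k)) := by
  have h01 : (0:ℝ) < 1 := one_pos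
  have hmem : ∀ z ∈ Icc (0:ℝ) 1, 1 - z ∈ Icc (0:ℝ) 1 := by
    intro z hz; exact ⟨by linarith [hz.2], by linarith [hz.1]⟩
  have hpos : ∀ z ∈ Ico (0:ℝ) 1, 0 < r z := by
    intro z hz
    rcases (hnonneg z ⟨hz.1, hz.2.le⟩).lt_or_eq with h | h
    · exact h
    · exfalso
      have h2 := heq z ⟨hz.1, hz.2.le⟩
      rw [← h, zero_mul] at h2
      linarith [hz.2]
  set c : ℝ := r 0 * r 1 with hc
  have hc0 : 0 ≤ c := mul_nonneg (hnonneg 0 (by norm_num)) (hnonneg 1 (by norm_num))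
  -- Step A: the product identity
  have hgA : ∀ z ∈ Icc (0:ℝ) 1, r z * r (1 - z) = c + z - z^2 := by
    set φ : ℝ → ℝ := fun z => r z * r (1 - z) - z + z^2 with hφ
    have hφd : ∀ z ∈ Icc (0:ℝ) 1, HasDerivWithinAt φ 0 (Icc 0 1) z := by
      intro z hz
      have h1 := hderiv z hz
      have hcomp : HasDerivWithinAt (fun w => r (1 - w)) (-(r' (1 - z))) (Icc 0 1) z := by
        have hlin : HasDerivWithinAt (fun w : ℝ => 1 - w) (-1) (Icc 0 1) z := by
          simpa using ((hasDerivWithinAt_id z (Icc (0:ℝ) 1)).const_sub 1)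
        have := (hderiv (1 - z) (hmem z hz)).comp z hlin (fun w hw => hmem w hw)
        exact this.congr_deriv (by ring)
      have hmul := h1.mul hcomp
      have e1 := heq z hz
      have e2 := heq (1 - z) (hmem z hz)
      rw [show (1 : ℝ) - (1 - z) = z by ring] at e2
      have hT : HasDerivWithinAt φ (r' z * r (1 - z) + r z * -(r' (1 - z)) - 1 + 2 * z)
          (Icc 0 1) z := by
        have hid : HasDerivWithinAt (fun w : ℝ => w) 1 (Icc 0 1) z := hasDerivWithinAt_id z _
        have hsq : HasDerivWithinAt (fun w : ℝ => w^2) (2*z) (Icc 0 1) z := by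
          exact (hasDerivWithinAt_pow 2 z (s := Icc (0:ℝ) 1)).congr_deriv (by norm_num)
        exact (hmul.sub hid).add hsq
      convert hT using 1
      nlinarith [e1, e2]
    have hdiff : DifferentiableOn ℝ φ (Icc 0 1) :=
      fun z hz => (hφd z hz).differentiableWithinAt
    have hconst := constant_of_derivWithin_zero (f := φ) (a := 0) (b := 1) hdiff
      (fun x hx => (hφd x ⟨hx.1, hx.2.le⟩).derivWithin
        (uniqueDiffOn_Icc h01 x ⟨hx.1, hx.2.le⟩))
    intro z hz
    have hz0 := hconst z hz
    have h0 : φ 0 = c := by simp [hφ, hc]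
    have : φ z = c := by rw [hz0, h0]
    rw [hφ] at this
    simp only at this
    linarith [this]
  -- constants
  set k : ℝ := Real.sqrt (1 + 4*c) with hkdef
  have hk1 : 1 ≤ k := by
    have := Real.sqrt_le_sqrt (show (1:ℝ) ≤ 1 + 4*c by linarith)
    rwa [Real.sqrt_one] at this
  have hk0 : 0 < k := lt_of_lt_of_le one_pos hk1
  have hksq : k^2 = 1 + 4*c := Real.sq_sqrt (by linarith)
  set a : ℝ := (1+k)/2 with hadef
  set b : ℝ := (k-1)/2 with hbdef
  have ha1 : 1 ≤ a := by rw [hadef]; linarith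
  have ha0 : 0 < a := lt_of_lt_of_le one_pos ha1
  have hb0 : 0 ≤ b := by rw [hbdef]; linarith
  have habk : a + b = k := by rw [hadef, hbdef]; ring
  have hquad : ∀ z : ℝ, c + z - z^2 = (a - z) * (z + b) := by
    intro z
    rw [hadef, hbdef]
    linear_combination (-1/4 : ℝ) * hksq
  have hg : ∀ z ∈ Icc (0:ℝ) 1, r z * r (1 - z) = (a - z) * (z + b) :=
    fun z hz => (hgA z hz).trans (hquad z)
  set F : ℝ → ℝ := fun z => (a - z) ^ (a/k) * (z + b) ^ (b/k) with hFdef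
  have hazpos : ∀ z ∈ Ioo (0:ℝ) 1, 0 < a - z := fun z hz => by linarith [hz.2]
  have hzbpos : ∀ z ∈ Ioo (0:ℝ) 1, 0 < z + b := fun z hz => by linarith [hz.1]
  have hFpos : ∀ z ∈ Ioo (0:ℝ) 1, 0 < F z := fun z hz =>
    mul_pos (Real.rpow_pos_of_pos (hazpos z hz) _) (Real.rpow_pos_of_pos (hzbpos z hz) _)
  have hF' : ∀ z ∈ Ioo (0:ℝ) 1, HasDerivAt F (-z * F z / ((a - z) * (z + b))) z := by
    intro z hz
    have haz := hazpos z hz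
    have hzb := hzbpos z hz
    have h1 : HasDerivAt (fun w : ℝ => a - w) (-1) z := by
      simpa using (hasDerivAt_id z).const_sub a
    have h2 : HasDerivAt (fun w : ℝ => w + b) 1 z := by
      simpa using (hasDerivAt_id z).add_const b
    have h1p := h1.rpow_const (p := a/k) (Or.inl haz.ne')
    have h2p := h2.rpow_const (p := b/k) (Or.inl hzb.ne')
    have hT := h1p.mul h2p
    convert hT using 1
    · rfl
    · rfl
    · rfl
    rw [Real.rpow_sub_one haz.ne', Real.rpow_sub_one hzb.ne']
    rw [hFdef]
    simp only
    field_simp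
    ring_nf
    linear_combination z * habk
  -- Q = r / F is constant on (0,1)
  have hQd : ∀ z ∈ Ioo (0:ℝ) 1, HasDerivWithinAt (fun w => r w / F w) 0 (Ioo 0 1) z := by
    intro z hz
    have hz1 : 1 - z ∈ Ico (0:ℝ) 1 := ⟨by linarith [hz.2], by linarith [hz.1]⟩
    have hr1z : 0 < r (1 - z) := hpos _ hz1
    have hrz : 0 < r z := hpos _ ⟨hz.1.le, hz.2⟩
    have haz := hazpos z hz
    have hzb := hzbpos z hz
    have hDne : (a - z) * (z + b) ≠ 0 := (mul_pos haz hzb).ne'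
    have e2 := heq (1 - z) (hmem z (Ioo_subset_Icc_self hz))
    rw [show (1 : ℝ) - (1 - z) = z by ring] at e2
    have hD : r z * r (1 - z) = (a - z) * (z + b) := hg z (Ioo_subset_Icc_self hz)
    have hval : r' z = -z * r z / ((a - z) * (z + b)) := by
      rw [← hD, eq_div_iff (mul_pos hrz hr1z).ne']
      linear_combination r z * e2
    have hrD : HasDerivWithinAt r (-z * r z / ((a - z) * (z + b))) (Ioo 0 1) z := by
      have := (hderiv z (Ioo_subset_Icc_self hz)).mono Ioo_subset_Icc_self
      rwa [hval] at this
    have hFD := (hF' z hz).hasDerivWithinAt (s := Ioo (0:ℝ) 1)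
    have hdiv := hrD.div hFD (hFpos z hz).ne'
    have h0 : (-z * r z / ((a - z) * (z + b)) * F z -
        r z * (-z * F z / ((a - z) * (z + b)))) / F z ^ 2 = 0 := by
      rw [show -z * r z / ((a - z) * (z + b)) * F z -
        r z * (-z * F z / ((a - z) * (z + b))) = 0 by field_simp; ring, zero_div]
    rwa [h0] at hdiv
  have h12 : (1/2 : ℝ) ∈ Ioo (0:ℝ) 1 := by norm_num
  have hQconst : ∀ z ∈ Ioo (0:ℝ) 1, r z / F z = r (1/2) / F (1/2) := by
    intro z hz
    refine (convex_Ioo (0:ℝ) 1).is_const_of_fderivWithin_eq_zero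
      (fun w hw => (hQd w hw).differentiableWithinAt) ?_ hz h12
    intro w hw
    have hF0 : (ContinuousLinearMap.toSpanSingleton ℝ (0:ℝ)) = 0 := by
      ext; simp
    have := (hQd w hw).hasFDerivWithinAt
    rw [hF0] at this
    exact this.fderivWithin (isOpen_Ioo.uniqueDiffOn w hw)
  have hFsym : ∀ z ∈ Ioo (0:ℝ) 1, F z * F (1 - z) = (a - z) * (z + b) := by
    intro z hz
    have haz := hazpos z hz
    have hzb := hzbpos z hz
    have e1 : a - (1 - z) = z + b := by rw [hadef, hbdef]; ring
    have e2 : (1 - z) + b = a - z := by rw [hadef, hbdef]; ring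
    have hsum : a/k + b/k = 1 := by
      rw [← add_div, habk, div_self hk0.ne']
    rw [hFdef]
    simp only
    rw [e1, e2]
    rw [show (a - z) ^ (a/k) * (z + b) ^ (b/k) * ((z + b) ^ (a/k) * (a - z) ^ (b/k))
      = ((a - z) ^ (a/k) * (a - z) ^ (b/k)) * ((z + b) ^ (a/k) * (z + b) ^ (b/k)) by ring]
    rw [← Real.rpow_add haz, ← Real.rpow_add hzb, hsum, Real.rpow_one, Real.rpow_one]
  have hC : r (1/2) = F (1/2) := by
    have hgg := hg (1/2) (by norm_num)
    have hFF := hFsym (1/2) h12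
    rw [show (1:ℝ) - 1/2 = 1/2 by norm_num] at hgg hFF
    have hsq : r (1/2) * r (1/2) = F (1/2) * F (1/2) := by rw [hgg, ← hFF]
    have hrp : 0 < r (1/2) := hpos _ (by norm_num)
    have hFp : 0 < F (1/2) := hFpos _ h12
    rcases mul_self_eq_mul_self_iff.mp hsq with h | h
    · exact h
    · exfalso; linarith
  have hro : ∀ z ∈ Ioo (0:ℝ) 1, r z = F z := by
    intro z hz
    have h := hQconst z hz
    rw [hC, div_self (hFpos _ h12).ne'] at h
    exact (div_eq_one_iff_eq (hFpos z hz).ne').mp h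
  have hFca : ∀ x ∈ Icc (0:ℝ) 1, ContinuousAt F x := by
    intro x hx
    have hak : 0 ≤ a/k := div_nonneg ha0.le hk0.le
    have hbk : 0 ≤ b/k := div_nonneg hb0 hk0.le
    have c1 : ContinuousAt (fun z : ℝ => (a - z) ^ (a/k)) x :=
      (continuousAt_const.sub continuousAt_id).rpow_const (Or.inr hak)
    have c2 : ContinuousAt (fun z : ℝ => (z + b) ^ (b/k)) x :=
      (continuousAt_id.add continuousAt_const).rpow_const (Or.inr hbk)
    exact c1.mul c2
  refine ⟨k, hk1, ?_⟩
  intro z hz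
  have hcl : z ∈ closure (Ioo (0:ℝ) 1) := by
    rw [closure_Ioo (by norm_num : (0:ℝ) ≠ 1)]; exact hz
  haveI : (nhdsWithin z (Ioo (0:ℝ) 1)).NeBot := mem_closure_iff_nhdsWithin_neBot.mp hcl
  have t1 : Tendsto r (nhdsWithin z (Ioo (0:ℝ) 1)) (nhds (r z)) :=
    ((hderiv z hz).continuousWithinAt).mono Ioo_subset_Icc_self
  have t2 : Tendsto F (nhdsWithin z (Ioo (0:ℝ) 1)) (nhds (F z)) :=
    ((hFca z hz).continuousWithinAt)
  have t3 : Tendsto r (nhdsWithin z (Ioo (0:ℝ) 1)) (nhds (F z)) := by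
    refine t2.congr' ?_
    filter_upwards [self_mem_nhdsWithin] with w hw
    exact (hro w hw).symm
  have hrF : r z = F z := tendsto_nhds_unique t1 t3
  rw [hrF, hFdef]
  simp only
  rw [hadef, hbdef, div_div, div_div]
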